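/- Let ν be either (i) a Weibull distribution with shape k ∈ (0,1) and scale λ>0, with Φ(x)=(x/λ)^k, or (ii) a generalized lognormal distribution with parameters r>1, σ>0, μ∈ℝ, with Φ(x)=(log x)^r/(rσ^r). Let θ > 1 and F_Φ be the associated divergence-generating function, and define ψ(x) = a Φ⁻¹(x)^θ and I(c) = ∫_c^∞ e^y (ψ(y)+ψ'(y))(ψ'(y)+ψ''(y)) f((F_Φ'(e^y)−α₁)/α₂) dy. Then for all α₁ ∈ ℝ and α₂ > 0 there exists c > 0 such that I(c) is well-defined and finite. -/

import Mathlib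

open Filter MeasureTheory Set
open scoped ENNReal Topology

noncomputable section

/-- The `F`-divergence `D_F(η|ν)` between a reference density `f` and an
alternative density `g` on `(0,∞)` (the value `⊤` encodes an infinite divergence). -/
def Ddiv (F f g : ℝ → ℝ) : ℝ≥0∞ :=
  ∫⁻ x in Set.Ioi (0 : ℝ), ENNReal.ofReal (F (g x / f x) * f x)

/-- Generator of the polynomial (α-) divergence: `F(y) = (y^α - 1)/(α(α-1))`. -/
def Falpha (α : ℝ) : ℝ → ℝ := fun y => (y ^ α - 1) / (α * (α - 1))

/-- Class (i): the log-density grows at least linearly, `lim φ(x)/x > c > 0`. -/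
def IsClassI (φ : ℝ → ℝ) : Prop :=
  ∃ c : ℝ, 0 < c ∧ ∀ᶠ x in atTop, c < φ x / x

/-- Data witnessing that a distribution with log-density `φ` (density `exp(-φ)`) is of
class (ii): heavier than exponential but lighter than any power law, together with the
auxiliary function `Φ` and the inverse `Ψ = Φ⁻¹` of its restriction to `[x̄, ∞)`. -/
structure ClassIIData (φ : ℝ → ℝ) : Type where
  xbar : ℝ
  Φ : ℝ → ℝ
  Ψ : ℝ → ℝ
  xbar_pos : 0 < xbar
  tendsto_div_id : Tendsto (fun x => φ x / x) atTop (nhds 0)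
  tendsto_div_log : Tendsto (fun x => φ x / Real.log x) atTop atTop
  pos : ∀ x ∈ Set.Ici xbar, 0 < Φ x
  strictConcave : StrictConcaveOn ℝ (Set.Ici xbar) Φ
  smooth : ContDiffOn ℝ 2 Φ (Set.Ici xbar)
  strictMono : StrictMonoOn Φ (Set.Ici xbar)
  inv_left : ∀ x ∈ Set.Ici xbar, Ψ (Φ x) = x
  inv_right : ∀ y ∈ Set.Ici (Φ xbar), Φ (Ψ y) = y
  liminf_pos : ∃ c : ℝ, 0 < c ∧ ∀ᶠ x in atTop, c ≤ Ψ (φ x) / x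
  limsup_lt_top : ∃ C : ℝ, ∀ᶠ x in atTop, Ψ (φ x) / x ≤ C

namespace ClassIIData

variable {φ : ℝ → ℝ}

/-- `ȳ = exp(Φ(x̄))`. -/
def ybar (d : ClassIIData φ) : ℝ := Real.exp (d.Φ d.xbar)

/-- The constant `a = (1+log ȳ)/(Φ⁻¹(log ȳ)^θ + θ Φ⁻¹(log ȳ)^{θ-1} (Φ⁻¹)'(log ȳ))`. -/
def aconst (d : ClassIIData φ) (θ : ℝ) : ℝ :=
  (1 + Real.log d.ybar) /
    (d.Ψ (Real.log d.ybar) ^ θ +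
      θ * d.Ψ (Real.log d.ybar) ^ (θ - 1) * deriv d.Ψ (Real.log d.ybar))

/-- The constant `b = ȳ log ȳ - a ȳ Φ⁻¹(log ȳ)^θ`. -/
def bconst (d : ClassIIData φ) (θ : ℝ) : ℝ :=
  d.ybar * Real.log d.ybar - d.aconst θ * d.ybar * d.Ψ (Real.log d.ybar) ^ θ

/-- The divergence generator `F_Φ`: `y log y` for `y ≤ ȳ` and
`a y Φ⁻¹(log y)^θ + b` for `y > ȳ`. -/
def FPhi (d : ClassIIData φ) (θ : ℝ) : ℝ → ℝ := fun y =>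
  if y ≤ d.ybar then y * Real.log y
  else d.aconst θ * y * d.Ψ (Real.log y) ^ θ + d.bconst θ

/-- `ψ(x) = a Φ⁻¹(x)^θ`. -/
def psiFun (d : ClassIIData φ) (θ : ℝ) : ℝ → ℝ := fun x => d.aconst θ * d.Ψ x ^ θ

/-- The integrand of `I(c) = ∫_c^∞ e^y (ψ(y)+ψ'(y))(ψ'(y)+ψ''(y)) f((F_Φ'(e^y)-α₁)/α₂) dy`. -/
def Iintegrand (d : ClassIIData φ) (θ α₁ α₂ : ℝ) (f : ℝ → ℝ) : ℝ → ℝ := fun y =>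
  Real.exp y * (d.psiFun θ y + deriv (d.psiFun θ) y) *
    (deriv (d.psiFun θ) y + deriv (deriv (d.psiFun θ)) y) *
    f ((deriv (d.FPhi θ) (Real.exp y) - α₁) / α₂)

end ClassIIData

/-- Convex conjugate over `s ≥ 0`: `F*(x) = sup_{s ≥ 0} (x s - F(s))`. -/
def Fstar (F : ℝ → ℝ) : ℝ → ℝ := fun x => sSup ((fun s => x * s - F s) '' Set.Ici (0 : ℝ))

/-- Pseudo-regular variation: `limsup_{c→1} limsup_{x→∞} h(cx)/h(x) = 1`,
spelled out in ε-form. -/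
def PseudoRegularlyVarying (h : ℝ → ℝ) : Prop :=
  (∀ ε > (0:ℝ), ∀ᶠ c in nhds (1:ℝ), ∀ᶠ x in atTop, h (c * x) / h x ≤ 1 + ε) ∧
  (∀ ε > (0:ℝ), ∃ᶠ c in nhds (1:ℝ), ∃ᶠ x in atTop, 1 - ε ≤ h (c * x) / h x)

lemma tail_lemma (g G : ℝ → ℝ) (P : ℝ → Prop) {δ : ℝ} (hδ : 0 < δ)
    (h : ∀ᶠ y in atTop, g y = G y ∧ ‖G y‖ ≤ Real.exp (-δ * y) ∧ P y ∧ ContinuousAt G y) :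
    ∃ c : ℝ, 0 < c ∧ (∀ y ∈ Ici c, P y) ∧ IntegrableOn g (Ioi c) := by
  obtain ⟨c₀, hc₀⟩ := eventually_atTop.mp h
  have key : ∀ y ∈ Ioi (max c₀ 1), g y = G y ∧ ‖G y‖ ≤ Real.exp (-δ * y) ∧ P y ∧ ContinuousAt G y :=
    fun y hy => hc₀ y ((le_max_left _ _).trans hy.le)
  refine ⟨max c₀ 1, lt_of_lt_of_le one_pos (le_max_right _ _),
    fun y hy => (hc₀ y ((le_max_left _ _).trans hy)).2.2.1, ?_⟩
  have hGint : IntegrableOn G (Ioi (max c₀ 1)) volume := by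
    refine Integrable.mono' (exp_neg_integrableOn_Ioi _ hδ) ?_ ?_
    · exact (continuousOn_of_forall_continuousAt fun y hy => (key y hy).2.2.2).aestronglyMeasurable
        measurableSet_Ioi
    · filter_upwards [ae_restrict_mem measurableSet_Ioi] with y hy
      exact (key y hy).2.1
  exact hGint.congr_fun (fun y hy => ((key y hy).1).symm) measurableSet_Ioi


set_option maxHeartbeats 2000000 in
theorem stmt17_case1
    (φ f : ℝ → ℝ)
    (d : ClassIIData φ)
    (k lam : ℝ) (hk0 : 0 < k) (hk1 : k < 1) (hlam : 0 < lam)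
    (hfW : ∀ x ∈ Set.Ioi (0:ℝ),
          f x = k / lam * (x / lam) ^ (k - 1) * Real.exp (-((x / lam) ^ k)))
    (hΦ : d.Φ = (fun x => (x / lam) ^ k))
    (hΨ : d.Ψ = (fun y => lam * y ^ (1 / k))) :
    ∀ θ : ℝ, 1 < θ → ∀ α₁ : ℝ, ∀ α₂ : ℝ, 0 < α₂ → ∃ c : ℝ, 0 < c ∧
      (∀ y ∈ Set.Ici c, 0 < (deriv (d.FPhi θ) (Real.exp y) - α₁) / α₂) ∧
      IntegrableOn (d.Iintegrand θ α₁ α₂ f) (Set.Ioi c) := by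
  intro θ hθ α₁ α₂ hα₂
  have hθ0 : 0 < θ := lt_trans one_pos hθ
  obtain ⟨L, hLdef⟩ : ∃ L : ℝ, L = d.Φ d.xbar := ⟨_, rfl⟩
  have hL : 0 < L := by rw [hLdef]; exact d.pos d.xbar (Set.mem_Ici.mpr le_rfl)
  have hlogybar : Real.log d.ybar = L := by rw [ClassIIData.ybar, Real.log_exp, hLdef]
  have hybar1 : 1 < d.ybar := by
    rw [ClassIIData.ybar, show (1:ℝ) = Real.exp 0 from Real.exp_zero.symm]
    exact Real.exp_lt_exp.mpr (by rw [← hLdef]; exact hL)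
  -- Ψ at L and its derivative
  have hΨL : d.Ψ L = d.xbar := by
    simp only [hΨ, hLdef, hΦ]
    rw [← Real.rpow_mul (div_nonneg d.xbar_pos.le hlam.le), mul_one_div_cancel hk0.ne',
      Real.rpow_one, mul_comm, div_mul_cancel₀ _ hlam.ne']
  have hΨd : deriv d.Ψ L = lam * (1 / k * L ^ (1 / k - 1)) := by
    rw [hΨ]
    exact ((Real.hasDerivAt_rpow_const (Or.inl hL.ne')).const_mul lam).deriv
  have ha : 0 < d.aconst θ := by
    rw [ClassIIData.aconst, hlogybar, hΨd, hΨL]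
    have h1 : 0 < d.xbar ^ θ := Real.rpow_pos_of_pos d.xbar_pos θ
    have h2 : 0 < d.xbar ^ (θ - 1) := Real.rpow_pos_of_pos d.xbar_pos _
    have h3 : 0 < L ^ (1 / k - 1) := Real.rpow_pos_of_pos hL _
    have h4 : 0 < lam * (1 / k * L ^ (1 / k - 1)) := by positivity
    exact div_pos (by linarith) (add_pos h1 (mul_pos (mul_pos hθ0 h2) h4))
  obtain ⟨A, hAdef⟩ : ∃ A : ℝ, A = d.aconst θ * lam ^ θ := ⟨_, rfl⟩
  have hA0 : 0 < A := hAdef ▸ mul_pos ha (Real.rpow_pos_of_pos hlam θ)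
  obtain ⟨p, hpdef⟩ : ∃ p : ℝ, p = θ / k := ⟨_, rfl⟩
  have hp1 : 1 < p := by rw [hpdef, lt_div_iff₀ hk0]; nlinarith
  have hp0 : 0 < p := lt_trans one_pos hp1
  -- psiFun and its derivatives
  have hpsi : ∀ y : ℝ, 0 < y → d.psiFun θ y = A * y ^ p := by
    intro y hy
    show d.aconst θ * d.Ψ y ^ θ = A * y ^ p
    rw [hΨ]
    simp only
    rw [Real.mul_rpow hlam.le (Real.rpow_nonneg hy.le _), ← Real.rpow_mul hy.le,
      show 1 / k * θ = θ / k by ring, hAdef, hpdef]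
    ring
  have hpsi' : ∀ y : ℝ, 0 < y → deriv (d.psiFun θ) y = A * p * y ^ (p - 1) := by
    intro y hy
    have he : deriv (d.psiFun θ) y = deriv (fun y : ℝ => A * y ^ p) y :=
      Filter.EventuallyEq.deriv_eq
        (eventually_of_mem (isOpen_Ioi.mem_nhds hy) fun z hz => hpsi z hz)
    rw [he, ((Real.hasDerivAt_rpow_const (Or.inl hy.ne')).const_mul A).deriv]
    ring
  have hpsi'' : ∀ y : ℝ, 0 < y →
      deriv (deriv (d.psiFun θ)) y = A * p * (p - 1) * y ^ (p - 2) := by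
    intro y hy
    have he : deriv (deriv (d.psiFun θ)) y = deriv (fun y : ℝ => A * p * y ^ (p - 1)) y :=
      Filter.EventuallyEq.deriv_eq
        (eventually_of_mem (isOpen_Ioi.mem_nhds hy) fun z hz => hpsi' z hz)
    rw [he, ((Real.hasDerivAt_rpow_const (Or.inl hy.ne')).const_mul (A * p)).deriv,
      show p - 1 - 1 = p - 2 by ring]
    ring
  -- derivative of FPhi
  have hFd : ∀ y : ℝ, L < y →
      deriv (d.FPhi θ) (Real.exp y) = A * (y ^ p + p * y ^ (p - 1)) := by
    intro y hy
    have hy0 : 0 < y := hL.trans hy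
    have hty : d.ybar < Real.exp y := by
      rw [ClassIIData.ybar]
      exact Real.exp_lt_exp.mpr (by rw [← hLdef]; exact hy)
    have heqF : ∀ t ∈ Ioi d.ybar, d.FPhi θ t = A * (t * Real.log t ^ p) + d.bconst θ := by
      intro t ht
      have ht1 : (1:ℝ) < t := hybar1.trans ht
      have hlt : 0 < Real.log t := Real.log_pos ht1
      have h2 := hpsi (Real.log t) hlt
      simp only [ClassIIData.psiFun] at h2
      simp only [ClassIIData.FPhi]
      rw [if_neg (not_le.mpr ht)]
      linear_combination t * h2
    have he : deriv (d.FPhi θ) (Real.exp y) =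
        deriv (fun t : ℝ => A * (t * Real.log t ^ p) + d.bconst θ) (Real.exp y) :=
      Filter.EventuallyEq.deriv_eq
        (eventually_of_mem (isOpen_Ioi.mem_nhds hty) heqF)
    rw [he]
    have ht0 : Real.exp y ≠ 0 := (Real.exp_pos y).ne'
    have hlt : Real.log (Real.exp y) ≠ 0 := by rw [Real.log_exp]; exact hy0.ne'
    have h1 : HasDerivAt (fun t : ℝ => Real.log t ^ p)
        (p * Real.log (Real.exp y) ^ (p - 1) * (Real.exp y)⁻¹) (Real.exp y) :=
      (Real.hasDerivAt_rpow_const (Or.inl hlt)).comp _ (Real.hasDerivAt_log ht0)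
    have h2 : HasDerivAt (fun t : ℝ => t * Real.log t ^ p)
        (1 * Real.log (Real.exp y) ^ p +
          Real.exp y * (p * Real.log (Real.exp y) ^ (p - 1) * (Real.exp y)⁻¹)) (Real.exp y) := by
      simpa [Pi.mul_def] using (hasDerivAt_id (Real.exp y)).mul h1
    rw [((h2.const_mul A).add_const (d.bconst θ)).deriv, Real.log_exp]
    field_simp
    try ring
  -- abbreviations
  obtain ⟨M, hMdef⟩ : ∃ M : ℝ, M = A / (2 * α₂) := ⟨_, rfl⟩
  have hM0 : 0 < M := by rw [hMdef]; positivity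
  obtain ⟨B, hBdef⟩ : ∃ B : ℝ, B = (M / lam) ^ k := ⟨_, rfl⟩
  have hB0 : 0 < B := hBdef ▸ Real.rpow_pos_of_pos (by positivity) k
  obtain ⟨C0, hC0def⟩ : ∃ C0 : ℝ, C0 = (A + A * p) * (A * p + A * p * (p - 1)) * (k / lam) :=
    ⟨_, rfl⟩
  obtain ⟨Qf, hQdef⟩ : ∃ Qf : ℝ → ℝ,
      Qf = fun y => (A * (y ^ p + p * y ^ (p - 1)) - α₁) / α₂ := ⟨_, rfl⟩
  obtain ⟨G, hGdef⟩ : ∃ G : ℝ → ℝ, G = fun y =>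
      Real.exp y * (A * y ^ p + A * p * y ^ (p - 1)) *
        (A * p * y ^ (p - 1) + A * p * (p - 1) * y ^ (p - 2)) *
        (k / lam * (Qf y / lam) ^ (k - 1) * Real.exp (-((Qf y / lam) ^ k))) := ⟨_, rfl⟩
  -- eventual facts
  have htend : Tendsto (fun y : ℝ => y ^ p) atTop atTop := tendsto_rpow_atTop hp0
  have ev3 : ∀ᶠ y : ℝ in atTop, α₁ ≤ A / 2 * y ^ p :=
    (htend.const_mul_atTop (by positivity : (0:ℝ) < A / 2)).eventually_ge_atTop α₁
  have ev4 : ∀ᶠ y : ℝ in atTop, lam ≤ M * y ^ p :=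
    (htend.const_mul_atTop hM0).eventually_ge_atTop lam
  have ev5 : ∀ᶠ y : ℝ in atTop, y ^ (2 * p) ≤ Real.exp y := by
    filter_upwards [(tendsto_exp_div_rpow_atTop (2 * p)).eventually_ge_atTop 1,
      eventually_gt_atTop (0:ℝ)] with y h1 h2
    rw [le_div_iff₀ (Real.rpow_pos_of_pos h2 _), one_mul] at h1
    exact h1
  have ev6 : ∀ᶠ y : ℝ in atTop, C0 ≤ Real.exp y :=
    Real.tendsto_exp_atTop.eventually_ge_atTop C0
  have ev7 : ∀ᶠ y : ℝ in atTop, 4 * y ≤ B * y ^ θ := by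
    filter_upwards [(tendsto_rpow_atTop (show (0:ℝ) < θ - 1 by linarith)).eventually_ge_atTop
      (4 / B), eventually_gt_atTop (0:ℝ)] with y h1 h2
    have h3 : B * (4 / B) ≤ B * y ^ (θ - 1) := mul_le_mul_of_nonneg_left h1 hB0.le
    have h4 : B * (4 / B) = 4 := by field_simp
    calc 4 * y = B * (4 / B) * y := by rw [h4]
      _ ≤ B * y ^ (θ - 1) * y := mul_le_mul_of_nonneg_right h3 h2.le
      _ = B * y ^ θ := by
          rw [show θ = θ - 1 + 1 by ring, Real.rpow_add h2, Real.rpow_one]; ring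
  have main : ∀ᶠ y in atTop,
      d.Iintegrand θ α₁ α₂ f y = G y ∧ ‖G y‖ ≤ Real.exp (-1 * y) ∧
      (0 < (deriv (d.FPhi θ) (Real.exp y) - α₁) / α₂) ∧ ContinuousAt G y := by
    filter_upwards [eventually_ge_atTop (1:ℝ), eventually_gt_atTop L, ev3, ev4, ev5, ev6, ev7]
      with y hy1 hyL h3 h4 h5 h6 h7
    have hy0 : 0 < y := lt_of_lt_of_le one_pos hy1
    have hyp : 0 < y ^ p := Real.rpow_pos_of_pos hy0 _
    have hyp1 : 0 < y ^ (p - 1) := Real.rpow_pos_of_pos hy0 _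
    have hyp2 : 0 < y ^ (p - 2) := Real.rpow_pos_of_pos hy0 _
    have hQlow : M * y ^ p ≤ Qf y := by
      rw [hQdef]
      simp only
      rw [le_div_iff₀ hα₂]
      have e : M * y ^ p * α₂ = A / 2 * y ^ p := by rw [hMdef]; field_simp
      rw [e]
      nlinarith [mul_pos (mul_pos hA0 hp0) hyp1]
    have hQpos : 0 < Qf y := lt_of_lt_of_le (by positivity) hQlow
    have hQl1 : 1 ≤ Qf y / lam := by
      rw [le_div_iff₀ hlam, one_mul]
      linarith
    have hQlpos : 0 < Qf y / lam := div_pos hQpos hlam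
    -- the four conjuncts
    refine ⟨?_, ?_, ?_, ?_⟩
    · -- equality
      have hQy : Qf y = (A * (y ^ p + p * y ^ (p - 1)) - α₁) / α₂ := by rw [hQdef]
      simp only [ClassIIData.Iintegrand, hGdef]
      rw [hpsi y hy0, hpsi' y hy0, hpsi'' y hy0, hFd y hyL, ← hQy,
        hfW _ (Set.mem_Ioi.mpr hQpos)]
    · -- bound
      have hS1 : 0 ≤ A * y ^ p + A * p * y ^ (p - 1) := by positivity
      have hS2 : 0 ≤ A * p * y ^ (p - 1) + A * p * (p - 1) * y ^ (p - 2) := by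
        have t1 : 0 < A * p * y ^ (p - 1) := by positivity
        have t2 : 0 ≤ A * p * (p - 1) * y ^ (p - 2) :=
          (mul_pos (mul_pos (mul_pos hA0 hp0) (sub_pos.mpr hp1)) hyp2).le
        linarith
      have hS3 : 0 ≤ k / lam * (Qf y / lam) ^ (k - 1) * Real.exp (-((Qf y / lam) ^ k)) := by
        have := Real.rpow_nonneg hQlpos.le (k - 1)
        positivity
      have hGnn : 0 ≤ G y := by
        simp only [hGdef]
        exact mul_nonneg (mul_nonneg (mul_nonneg (Real.exp_pos y).le hS1) hS2) hS3
      rw [Real.norm_eq_abs, abs_of_nonneg hGnn]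
      simp only [hGdef]
      have hyple : y ^ (p - 1) ≤ y ^ p :=
        Real.rpow_le_rpow_of_exponent_le hy1 (by linarith)
      have hyple2 : y ^ (p - 2) ≤ y ^ p :=
        Real.rpow_le_rpow_of_exponent_le hy1 (by linarith)
      have hApp1 : (0:ℝ) ≤ A * p * (p - 1) :=
        (mul_pos (mul_pos hA0 hp0) (sub_pos.mpr hp1)).le
      have b1 : A * y ^ p + A * p * y ^ (p - 1) ≤ (A + A * p) * y ^ p := by
        rw [add_mul]
        exact add_le_add le_rfl (mul_le_mul_of_nonneg_left hyple (by positivity))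
      have b2 : A * p * y ^ (p - 1) + A * p * (p - 1) * y ^ (p - 2)
          ≤ (A * p + A * p * (p - 1)) * y ^ p := by
        rw [add_mul]
        exact add_le_add (mul_le_mul_of_nonneg_left hyple (by positivity))
          (mul_le_mul_of_nonneg_left hyple2 hApp1)
      have hBy : B * y ^ θ ≤ (Qf y / lam) ^ k := by
        have e1 : p * k = θ := by rw [hpdef]; field_simp
        have e2 : B * y ^ θ = (M / lam * y ^ p) ^ k := by
          rw [Real.mul_rpow (by positivity) (Real.rpow_nonneg hy0.le p),
            ← Real.rpow_mul hy0.le, e1, hBdef]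
        rw [e2]
        apply Real.rpow_le_rpow (by positivity) _ hk0.le
        calc M / lam * y ^ p = M * y ^ p / lam := by ring
          _ ≤ Qf y / lam := (div_le_div_iff_of_pos_right hlam).mpr hQlow
      have b3 : k / lam * (Qf y / lam) ^ (k - 1) * Real.exp (-((Qf y / lam) ^ k))
          ≤ k / lam * Real.exp (-(B * y ^ θ)) := by
        have hr1 : (Qf y / lam) ^ (k - 1) ≤ 1 :=
          Real.rpow_le_one_of_one_le_of_nonpos hQl1 (by linarith)
        have hex : Real.exp (-((Qf y / lam) ^ k)) ≤ Real.exp (-(B * y ^ θ)) :=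
          Real.exp_le_exp.mpr (neg_le_neg hBy)
        calc k / lam * (Qf y / lam) ^ (k - 1) * Real.exp (-((Qf y / lam) ^ k))
            ≤ k / lam * 1 * Real.exp (-(B * y ^ θ)) := by
              apply mul_le_mul (mul_le_mul_of_nonneg_left hr1 (by positivity)) hex
                (Real.exp_pos _).le (by positivity)
          _ = k / lam * Real.exp (-(B * y ^ θ)) := by ring
      calc Real.exp y * (A * y ^ p + A * p * y ^ (p - 1)) *
            (A * p * y ^ (p - 1) + A * p * (p - 1) * y ^ (p - 2)) *
            (k / lam * (Qf y / lam) ^ (k - 1) * Real.exp (-((Qf y / lam) ^ k)))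
          ≤ Real.exp y * ((A + A * p) * y ^ p) *
            ((A * p + A * p * (p - 1)) * y ^ p) * (k / lam * Real.exp (-(B * y ^ θ))) := by
            apply mul_le_mul _ b3 hS3 _
            · apply mul_le_mul (mul_le_mul_of_nonneg_left b1 (Real.exp_pos y).le) b2 hS2
              positivity
            · have : (0:ℝ) ≤ A * p + A * p * (p - 1) := by nlinarith
              positivity
        _ = C0 * (y ^ p * y ^ p) * (Real.exp y * Real.exp (-(B * y ^ θ))) := by
            rw [hC0def]; ring
        _ = C0 * y ^ (2 * p) * (Real.exp y * Real.exp (-(B * y ^ θ))) := by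
            rw [← Real.rpow_add hy0, show p + p = 2 * p by ring]
        _ ≤ Real.exp y * Real.exp y * (Real.exp y * Real.exp (-(4 * y))) := by
            apply mul_le_mul (mul_le_mul h6 h5 (Real.rpow_nonneg hy0.le _)
              (Real.exp_pos _).le)
              (mul_le_mul_of_nonneg_left (Real.exp_le_exp.mpr (by linarith))
                (Real.exp_pos _).le)
              (by positivity) (by positivity)
        _ = Real.exp (-1 * y) := by
            rw [← Real.exp_add, ← Real.exp_add, ← Real.exp_add]
            congr 1
            ring
    · -- positivity of the argument
      rw [hFd y hyL, show (A * (y ^ p + p * y ^ (p - 1)) - α₁) / α₂ = Qf y by rw [hQdef]]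
      exact hQpos
    · -- continuity
      have cp : ContinuousAt (fun y : ℝ => y ^ p) y :=
        Real.continuousAt_rpow_const _ _ (Or.inl hy0.ne')
      have cp1 : ContinuousAt (fun y : ℝ => y ^ (p - 1)) y :=
        Real.continuousAt_rpow_const _ _ (Or.inl hy0.ne')
      have cp2 : ContinuousAt (fun y : ℝ => y ^ (p - 2)) y :=
        Real.continuousAt_rpow_const _ _ (Or.inl hy0.ne')
      have cQ : ContinuousAt Qf y := by
        rw [hQdef]
        exact (((cp.add (cp1.const_mul p)).const_mul A).sub continuousAt_const).div_const α₂
      have cQl : ContinuousAt (fun y => Qf y / lam) y := cQ.div_const lam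
      have hQlne : Qf y / lam ≠ 0 := hQlpos.ne'
      have c3a : ContinuousAt (fun y => (Qf y / lam) ^ (k - 1)) y :=
        cQl.rpow_const (Or.inl hQlne)
      have c3b : ContinuousAt (fun y => Real.exp (-((Qf y / lam) ^ k))) y :=
        ((cQl.rpow_const (Or.inl hQlne)).neg).rexp
      rw [hGdef]
      exact ((Real.continuous_exp.continuousAt.mul
        ((cp.const_mul A).add (cp1.const_mul (A * p)))).mul
        ((cp1.const_mul (A * p)).add (cp2.const_mul (A * p * (p - 1))))).mul
        (((continuousAt_const.mul c3a)).mul c3b)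
  exact tail_lemma _ G _ one_pos main


set_option maxHeartbeats 2000000 in
theorem stmt17_case2
    (φ f : ℝ → ℝ)
    (d : ClassIIData φ)
    (r σ μ Z : ℝ) (hr1 : 1 < r) (hσ : 0 < σ)
    (hZdef : Z = 2 * r ^ (1 / r) * σ * Real.Gamma (1 + 1 / r))
    (hfG : ∀ x ∈ Set.Ioi (0:ℝ),
          f x = 1 / (Z * x) * Real.exp (-(|Real.log x - μ| ^ r / (r * σ ^ r))))
    (hΦ : d.Φ = (fun x => Real.log x ^ r / (r * σ ^ r)))
    (hΨ : d.Ψ = (fun y => Real.exp (σ * r ^ (1 / r) * y ^ (1 / r)))) :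
    ∀ θ : ℝ, 1 < θ → ∀ α₁ : ℝ, ∀ α₂ : ℝ, 0 < α₂ → ∃ c : ℝ, 0 < c ∧
      (∀ y ∈ Set.Ici c, 0 < (deriv (d.FPhi θ) (Real.exp y) - α₁) / α₂) ∧
      IntegrableOn (d.Iintegrand θ α₁ α₂ f) (Set.Ioi c) := by
  intro θ hθ α₁ α₂ hα₂
  have hθ0 : 0 < θ := lt_trans one_pos hθ
  have hr0 : 0 < r := lt_trans one_pos hr1
  have hrinv1 : 1 / r ≤ 1 := by rw [div_le_one hr0]; exact hr1.le
  have hrinv0 : 0 < 1 / r := by positivity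
  obtain ⟨L, hLdef⟩ : ∃ L : ℝ, L = d.Φ d.xbar := ⟨_, rfl⟩
  have hL : 0 < L := by rw [hLdef]; exact d.pos d.xbar (Set.mem_Ici.mpr le_rfl)
  have hlogybar : Real.log d.ybar = L := by rw [ClassIIData.ybar, Real.log_exp, hLdef]
  have hybar1 : 1 < d.ybar := by
    rw [ClassIIData.ybar, show (1:ℝ) = Real.exp 0 from Real.exp_zero.symm]
    exact Real.exp_lt_exp.mpr (by rw [← hLdef]; exact hL)
  obtain ⟨s, hsdef⟩ : ∃ s : ℝ, s = σ * r ^ (1 / r) := ⟨_, rfl⟩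
  have hs0 : 0 < s := by rw [hsdef]; positivity
  obtain ⟨T, hTdef⟩ : ∃ T : ℝ, T = θ * s := ⟨_, rfl⟩
  have hT0 : 0 < T := by rw [hTdef]; positivity
  obtain ⟨E, hEdef⟩ : ∃ E : ℝ → ℝ, E = fun y : ℝ => Real.exp (T * y ^ (1 / r)) := ⟨_, rfl⟩
  have hE0 : ∀ y : ℝ, 0 < E y := by intro y; rw [hEdef]; exact Real.exp_pos _
  -- derivative of Ψ at L and positivity of aconst
  have hΨd : deriv d.Ψ L = Real.exp (s * L ^ (1 / r)) * (s * (1 / r * L ^ (1 / r - 1))) := by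
    rw [hΨ, ← hsdef]
    exact (((Real.hasDerivAt_rpow_const (Or.inl hL.ne')).const_mul s).exp).deriv
  have hΨL : d.Ψ L = Real.exp (s * L ^ (1 / r)) := by rw [hΨ, ← hsdef]
  have ha : 0 < d.aconst θ := by
    rw [ClassIIData.aconst, hlogybar, hΨd, hΨL]
    have h1 : 0 < Real.exp (s * L ^ (1 / r)) ^ θ :=
      Real.rpow_pos_of_pos (Real.exp_pos _) θ
    have h2 : 0 < Real.exp (s * L ^ (1 / r)) ^ (θ - 1) :=
      Real.rpow_pos_of_pos (Real.exp_pos _) _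
    have h3 : 0 < L ^ (1 / r - 1) := Real.rpow_pos_of_pos hL _
    have h4 : 0 < Real.exp (s * L ^ (1 / r)) * (s * (1 / r * L ^ (1 / r - 1))) := by positivity
    exact div_pos (by linarith) (add_pos h1 (mul_pos (mul_pos hθ0 h2) h4))
  obtain ⟨aa, haadef⟩ : ∃ aa : ℝ, aa = d.aconst θ := ⟨_, rfl⟩
  have haa0 : 0 < aa := haadef ▸ ha
  -- psiFun as a * E
  have hfun : d.psiFun θ = fun y => aa * E y := by
    funext y
    show d.aconst θ * d.Ψ y ^ θ = aa * E y
    rw [hΨ, hEdef, ← haadef]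
    simp only
    rw [← Real.exp_mul, show σ * r ^ (1 / r) * y ^ (1 / r) * θ = T * y ^ (1 / r) by
      rw [hTdef, hsdef]; ring]
  have hEd : ∀ y : ℝ, 0 < y →
      HasDerivAt E (E y * (T * (1 / r * y ^ (1 / r - 1)))) y := by
    intro y hy
    rw [hEdef]
    exact ((Real.hasDerivAt_rpow_const (Or.inl hy.ne')).const_mul T).exp
  have hpsi' : ∀ y : ℝ, 0 < y →
      deriv (d.psiFun θ) y = aa * T * (1 / r) * (E y * y ^ (1 / r - 1)) := by
    intro y hy
    rw [hfun, ((hEd y hy).const_mul aa).deriv]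
    ring
  have hpsi'' : ∀ y : ℝ, 0 < y →
      deriv (deriv (d.psiFun θ)) y = aa * T * (1 / r) *
        (E y * (T * (1 / r * y ^ (1 / r - 1))) * y ^ (1 / r - 1) +
          E y * ((1 / r - 1) * y ^ (1 / r - 1 - 1))) := by
    intro y hy
    have he : deriv (deriv (d.psiFun θ)) y =
        deriv (fun y : ℝ => aa * T * (1 / r) * (E y * y ^ (1 / r - 1))) y :=
      Filter.EventuallyEq.deriv_eq
        (eventually_of_mem (isOpen_Ioi.mem_nhds hy) fun z hz => hpsi' z hz)
    rw [he]; exact (((hEd y hy).mul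
      (Real.hasDerivAt_rpow_const (Or.inl hy.ne'))).const_mul (aa * T * (1 / r))).deriv
  -- derivative of FPhi
  have hFd : ∀ y : ℝ, L < y → deriv (d.FPhi θ) (Real.exp y) =
      aa * E y + aa * E y * (T * (1 / r) * y ^ (1 / r - 1)) := by
    intro y hy
    have hy0 : 0 < y := hL.trans hy
    have hty : d.ybar < Real.exp y := by
      rw [ClassIIData.ybar]
      exact Real.exp_lt_exp.mpr (by rw [← hLdef]; exact hy)
    have heqF : ∀ t ∈ Ioi d.ybar,
        d.FPhi θ t = aa * (t * E (Real.log t)) + d.bconst θ := by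
      intro t ht
      have h2 : d.aconst θ * d.Ψ (Real.log t) ^ θ = aa * E (Real.log t) := by
        have := congrFun hfun (Real.log t)
        simpa [ClassIIData.psiFun] using this
      simp only [ClassIIData.FPhi]
      rw [if_neg (not_le.mpr ht)]
      linear_combination t * h2
    have he : deriv (d.FPhi θ) (Real.exp y) =
        deriv (fun t : ℝ => aa * (t * E (Real.log t)) + d.bconst θ) (Real.exp y) :=
      Filter.EventuallyEq.deriv_eq
        (eventually_of_mem (isOpen_Ioi.mem_nhds hty) heqF)
    rw [he]
    have ht0 : Real.exp y ≠ 0 := (Real.exp_pos y).ne'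
    have hEly : HasDerivAt E (E y * (T * (1 / r * y ^ (1 / r - 1))))
        (Real.log (Real.exp y)) := by
      rw [Real.log_exp]; exact hEd y hy0
    have h1 : HasDerivAt (fun t : ℝ => E (Real.log t))
        (E y * (T * (1 / r * y ^ (1 / r - 1))) * (Real.exp y)⁻¹) (Real.exp y) :=
      hEly.comp _ (Real.hasDerivAt_log ht0)
    have h2 : HasDerivAt (fun t : ℝ => t * E (Real.log t))
        (1 * E y + Real.exp y * (E y * (T * (1 / r * y ^ (1 / r - 1))) * (Real.exp y)⁻¹))
        (Real.exp y) := by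
      simpa [Real.log_exp, Pi.mul_def] using (hasDerivAt_id (Real.exp y)).mul h1
    rw [((h2.const_mul aa).add_const (d.bconst θ)).deriv]
    field_simp
  -- constants
  have hZ0 : 0 < Z := by
    rw [hZdef]
    have h1 := Real.Gamma_pos_of_pos (show (0:ℝ) < 1 + 1 / r by positivity)
    have h2 : 0 < (r:ℝ) ^ (1 / r) := Real.rpow_pos_of_pos hr0 _
    positivity
  obtain ⟨M, hMdef⟩ : ∃ M : ℝ, M = aa / (2 * α₂) := ⟨_, rfl⟩
  have hM0 : 0 < M := by rw [hMdef]; positivity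
  obtain ⟨β, hβdef⟩ : ∃ β : ℝ, β = ((1 + θ) / 2) ^ r := ⟨_, rfl⟩
  have hθ'1 : 1 < (1 + θ) / 2 := by linarith
  have hβ1 : 1 < β := by
    rw [hβdef]
    calc (1:ℝ) < (1 + θ) / 2 := hθ'1
      _ = ((1 + θ) / 2) ^ (1:ℝ) := (Real.rpow_one _).symm
      _ ≤ ((1 + θ) / 2) ^ r := Real.rpow_le_rpow_of_exponent_le hθ'1.le hr1.le
  obtain ⟨δ, hδdef⟩ : ∃ δ : ℝ, δ = (β - 1) / 2 := ⟨_, rfl⟩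
  have hδ0 : 0 < δ := by rw [hδdef]; linarith
  obtain ⟨T', hT'def⟩ : ∃ T' : ℝ, T' = (1 + θ) / 2 * s := ⟨_, rfl⟩
  have hT'0 : 0 < T' := by rw [hT'def]; positivity
  have hT'T : T' < T := by
    rw [hT'def, hTdef]
    exact mul_lt_mul_of_pos_right (by linarith) hs0
  have hsr : s ^ r = σ ^ r * r := by
    rw [hsdef, Real.mul_rpow hσ.le (Real.rpow_nonneg hr0.le _),
      ← Real.rpow_mul hr0.le, one_div_mul_cancel hr0.ne', Real.rpow_one]
  have hT'r : ∀ y : ℝ, 0 ≤ y → (T' * y ^ (1 / r)) ^ r = β * (σ ^ r * r) * y := by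
    intro y hy
    rw [Real.mul_rpow hT'0.le (Real.rpow_nonneg hy _), ← Real.rpow_mul hy,
      one_div_mul_cancel hr0.ne', Real.rpow_one, hT'def,
      Real.mul_rpow (by linarith : (0:ℝ) ≤ (1 + θ) / 2) hs0.le, hsr, ← hβdef]
  obtain ⟨C1, hC1def⟩ : ∃ C1 : ℝ, C1 = aa * (1 + T * (1 / r)) := ⟨_, rfl⟩
  obtain ⟨C2, hC2def⟩ : ∃ C2 : ℝ, C2 = aa * T * (1 / r) * (1 + (T * (1 / r) + (1 - 1 / r))) :=
    ⟨_, rfl⟩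
  obtain ⟨Qf, hQdef⟩ : ∃ Qf : ℝ → ℝ, Qf = fun y =>
      (aa * E y + aa * E y * (T * (1 / r) * y ^ (1 / r - 1)) - α₁) / α₂ := ⟨_, rfl⟩
  obtain ⟨G, hGdef⟩ : ∃ G : ℝ → ℝ, G = fun y =>
      Real.exp y * (aa * E y + aa * T * (1 / r) * (E y * y ^ (1 / r - 1))) *
        (aa * T * (1 / r) * (E y * y ^ (1 / r - 1)) + aa * T * (1 / r) *
          (E y * (T * (1 / r * y ^ (1 / r - 1))) * y ^ (1 / r - 1) +
            E y * ((1 / r - 1) * y ^ (1 / r - 1 - 1)))) *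
        (1 / (Z * Qf y) * Real.exp (-(|Real.log (Qf y) - μ| ^ r / (r * σ ^ r)))) := ⟨_, rfl⟩
  -- eventual facts
  have hEtend : Tendsto E atTop atTop := by
    rw [hEdef]
    exact Real.tendsto_exp_atTop.comp ((tendsto_rpow_atTop hrinv0).const_mul_atTop hT0)
  have ev3 : ∀ᶠ y : ℝ in atTop, α₁ ≤ aa / 2 * E y :=
    (hEtend.const_mul_atTop (by positivity : (0:ℝ) < aa / 2)).eventually_ge_atTop α₁
  have ev4 : ∀ᶠ y : ℝ in atTop, 1 ≤ M * E y :=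
    (hEtend.const_mul_atTop hM0).eventually_ge_atTop 1
  have ev5 : ∀ᶠ y : ℝ in atTop, μ - Real.log M ≤ (T - T') * y ^ (1 / r) :=
    ((tendsto_rpow_atTop hrinv0).const_mul_atTop (sub_pos.mpr hT'T)).eventually_ge_atTop _
  have ev6 : ∀ᶠ y : ℝ in atTop, 2 * T * y ^ (1 / r) ≤ δ / 2 * y := by
    have h0 : (0:ℝ) < δ / (4 * T) := by positivity
    have h1 : ∀ᶠ y : ℝ in atTop, y ^ (-(1 - 1 / r)) < δ / (4 * T) :=
      (tendsto_rpow_neg_atTop (by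
        have : 1 / r < 1 := by rw [div_lt_one hr0]; exact hr1
        linarith : (0:ℝ) < 1 - 1 / r)).eventually_lt_const h0
    filter_upwards [h1, eventually_gt_atTop (0:ℝ)] with y h1 hy
    have e1 : y ^ (-(1 - 1 / r)) = y ^ (1 / r - 1) := by norm_num
    have e2 : y ^ (1 / r) = y ^ (1 / r - 1) * y := by
      rw [← Real.rpow_add_one hy.ne' (1 / r - 1)]
      norm_num
    rw [e1] at h1
    rw [e2]
    have h2 : 2 * T * (y ^ (1 / r - 1) * y) ≤ 2 * T * (δ / (4 * T) * y) := by
      apply mul_le_mul_of_nonneg_left (mul_le_mul_of_nonneg_right h1.le hy.le) (by positivity)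
    have h3 : 2 * T * (δ / (4 * T) * y) = δ / 2 * y := by field_simp; ring
    linarith
  have ev7 : ∀ᶠ y : ℝ in atTop, C1 * C2 / Z ≤ Real.exp (δ / 2 * y) := by
    have : Tendsto (fun y : ℝ => Real.exp (δ / 2 * y)) atTop atTop :=
      Real.tendsto_exp_atTop.comp (tendsto_id.const_mul_atTop (by positivity))
    exact this.eventually_ge_atTop _
  have main : ∀ᶠ y in atTop,
      d.Iintegrand θ α₁ α₂ f y = G y ∧ ‖G y‖ ≤ Real.exp (-δ * y) ∧
      (0 < (deriv (d.FPhi θ) (Real.exp y) - α₁) / α₂) ∧ ContinuousAt G y := by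
    filter_upwards [eventually_ge_atTop (1:ℝ), eventually_gt_atTop L, ev3, ev4, ev5, ev6, ev7]
      with y hy1 hyL h3 h4 h5 h6 h7
    have hy0 : 0 < y := lt_of_lt_of_le one_pos hy1
    have hEy : 0 < E y := hE0 y
    have hm1pos : 0 < y ^ (1 / r - 1) := Real.rpow_pos_of_pos hy0 _
    have hm2pos : 0 < y ^ (1 / r - 1 - 1) := Real.rpow_pos_of_pos hy0 _
    have hm1le : y ^ (1 / r - 1) ≤ 1 :=
      Real.rpow_le_one_of_one_le_of_nonpos hy1 (by linarith)
    have hm2le : y ^ (1 / r - 1 - 1) ≤ 1 :=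
      Real.rpow_le_one_of_one_le_of_nonpos hy1 (by linarith)
    have hQlow : M * E y ≤ Qf y := by
      rw [hQdef]
      simp only
      rw [le_div_iff₀ hα₂]
      have e : M * E y * α₂ = aa / 2 * E y := by rw [hMdef]; field_simp
      rw [e]
      have t2 : 0 ≤ aa * E y * (T * (1 / r) * y ^ (1 / r - 1)) := by positivity
      linarith
    have hQpos : 0 < Qf y := lt_of_lt_of_le (by positivity) hQlow
    have hQ1 : 1 ≤ Qf y := le_trans h4 hQlow
    refine ⟨?_, ?_, ?_, ?_⟩
    · -- equality
      have hQy : Qf y = (aa * E y + aa * E y * (T * (1 / r) * y ^ (1 / r - 1)) - α₁) / α₂ := by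
        rw [hQdef]
      have hψy : d.psiFun θ y = aa * E y := by rw [hfun]
      simp only [ClassIIData.Iintegrand, hGdef]
      rw [hψy, hpsi' y hy0, hpsi'' y hy0, hFd y hyL, ← hQy, hfG _ (Set.mem_Ioi.mpr hQpos)]
    · -- bound
      have hb1 : |aa * E y + aa * T * (1 / r) * (E y * y ^ (1 / r - 1))| ≤ C1 * E y := by
        rw [abs_of_nonneg (by positivity)]
        have h : E y * y ^ (1 / r - 1) ≤ E y := mul_le_of_le_one_right hEy.le hm1le
        calc aa * E y + aa * T * (1 / r) * (E y * y ^ (1 / r - 1))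
            ≤ aa * E y + aa * T * (1 / r) * E y :=
              add_le_add le_rfl (mul_le_mul_of_nonneg_left h (by positivity))
          _ = C1 * E y := by rw [hC1def]; ring
      have hb2 : |aa * T * (1 / r) * (E y * y ^ (1 / r - 1)) + aa * T * (1 / r) *
          (E y * (T * (1 / r * y ^ (1 / r - 1))) * y ^ (1 / r - 1) +
            E y * ((1 / r - 1) * y ^ (1 / r - 1 - 1)))| ≤ C2 * E y := by
        have hX : |E y * (T * (1 / r * y ^ (1 / r - 1))) * y ^ (1 / r - 1) +
            E y * ((1 / r - 1) * y ^ (1 / r - 1 - 1))|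
            ≤ E y * (T * (1 / r)) + E y * (1 - 1 / r) := by
          refine (abs_add_le _ _).trans (add_le_add ?_ ?_)
          · rw [abs_of_nonneg (by positivity)]
            have e : E y * (T * (1 / r * y ^ (1 / r - 1))) * y ^ (1 / r - 1)
                = E y * (T * (1 / r)) * (y ^ (1 / r - 1) * y ^ (1 / r - 1)) := by ring
            rw [e]
            have h : y ^ (1 / r - 1) * y ^ (1 / r - 1) ≤ 1 :=
              mul_le_one₀ hm1le hm1pos.le hm1le
            calc E y * (T * (1 / r)) * (y ^ (1 / r - 1) * y ^ (1 / r - 1))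
                ≤ E y * (T * (1 / r)) * 1 :=
                  mul_le_mul_of_nonneg_left h (by positivity)
              _ = E y * (T * (1 / r)) := mul_one _
          · rw [abs_mul, abs_of_pos hEy, abs_mul,
              abs_of_nonpos (by linarith : 1 / r - 1 ≤ 0), abs_of_pos hm2pos]
            have h : -(1 / r - 1) * y ^ (1 / r - 1 - 1) ≤ (1 - 1 / r) * 1 := by
              rw [show -(1 / r - 1) = 1 - 1 / r by ring]
              exact mul_le_mul_of_nonneg_left hm2le (by linarith)
            rw [mul_one] at h
            exact mul_le_mul_of_nonneg_left h hEy.le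
        calc |aa * T * (1 / r) * (E y * y ^ (1 / r - 1)) + aa * T * (1 / r) *
            (E y * (T * (1 / r * y ^ (1 / r - 1))) * y ^ (1 / r - 1) +
              E y * ((1 / r - 1) * y ^ (1 / r - 1 - 1)))|
            ≤ |aa * T * (1 / r) * (E y * y ^ (1 / r - 1))| + |aa * T * (1 / r) *
              (E y * (T * (1 / r * y ^ (1 / r - 1))) * y ^ (1 / r - 1) +
                E y * ((1 / r - 1) * y ^ (1 / r - 1 - 1)))| := abs_add_le _ _
          _ ≤ aa * T * (1 / r) * E y + aa * T * (1 / r) *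
              (E y * (T * (1 / r)) + E y * (1 - 1 / r)) := by
              refine add_le_add ?_ ?_
              · rw [abs_of_nonneg (by positivity)]
                exact mul_le_mul_of_nonneg_left
                  (mul_le_of_le_one_right hEy.le hm1le) (by positivity)
              · rw [abs_mul, abs_of_nonneg (by positivity : (0:ℝ) ≤ aa * T * (1 / r))]
                exact mul_le_mul_of_nonneg_left hX (by positivity)
          _ = C2 * E y := by rw [hC2def]; ring
      have hb3 : |1 / (Z * Qf y) * Real.exp (-(|Real.log (Qf y) - μ| ^ r / (r * σ ^ r)))|
          ≤ 1 / Z * Real.exp (-(β * y)) := by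
        have hZQ : 0 < Z * Qf y := mul_pos hZ0 hQpos
        rw [abs_of_nonneg (by positivity)]
        have hd1 : 1 / (Z * Qf y) ≤ 1 / Z :=
          one_div_le_one_div_of_le hZ0 (le_mul_of_one_le_right hZ0.le hQ1)
        have hexp : Real.exp (-(|Real.log (Qf y) - μ| ^ r / (r * σ ^ r)))
            ≤ Real.exp (-(β * y)) := by
          rw [Real.exp_le_exp, neg_le_neg_iff]
          have hlogQ : Real.log M + T * y ^ (1 / r) ≤ Real.log (Qf y) := by
            have h1 : Real.log (M * E y) ≤ Real.log (Qf y) :=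
              Real.log_le_log (by positivity) hQlow
            rw [Real.log_mul hM0.ne' hEy.ne', hEdef] at h1
            simpa [Real.log_exp] using h1
          have h5' : μ - Real.log M ≤ T * y ^ (1 / r) - T' * y ^ (1 / r) := by
            rw [← sub_mul]; exact h5
          have hge : T' * y ^ (1 / r) ≤ Real.log (Qf y) - μ := by linarith
          have habs : T' * y ^ (1 / r) ≤ |Real.log (Qf y) - μ| :=
            hge.trans (le_abs_self _)
          have hpow : (T' * y ^ (1 / r)) ^ r ≤ |Real.log (Qf y) - μ| ^ r :=
            Real.rpow_le_rpow (by positivity) habs hr0.le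
          rw [hT'r y hy0.le] at hpow
          rw [le_div_iff₀ (by positivity : (0:ℝ) < r * σ ^ r)]
          calc β * y * (r * σ ^ r) = β * (σ ^ r * r) * y := by ring
            _ ≤ |Real.log (Qf y) - μ| ^ r := hpow
        exact mul_le_mul hd1 hexp (Real.exp_pos _).le (by positivity)
      -- assemble
      rw [hGdef]
      simp only
      rw [Real.norm_eq_abs, abs_mul, abs_mul, abs_mul, abs_of_pos (Real.exp_pos y)]
      calc Real.exp y * |aa * E y + aa * T * (1 / r) * (E y * y ^ (1 / r - 1))| *
            |aa * T * (1 / r) * (E y * y ^ (1 / r - 1)) + aa * T * (1 / r) *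
              (E y * (T * (1 / r * y ^ (1 / r - 1))) * y ^ (1 / r - 1) +
                E y * ((1 / r - 1) * y ^ (1 / r - 1 - 1)))| *
            |1 / (Z * Qf y) * Real.exp (-(|Real.log (Qf y) - μ| ^ r / (r * σ ^ r)))|
          ≤ Real.exp y * (C1 * E y) * (C2 * E y) * (1 / Z * Real.exp (-(β * y))) := by
            refine mul_le_mul ?_ hb3 (abs_nonneg _) ?_
            · refine mul_le_mul ?_ hb2 (abs_nonneg _) ?_
              · exact mul_le_mul_of_nonneg_left hb1 (Real.exp_pos y).le
              · have hC1pos : 0 < C1 := by rw [hC1def]; positivity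
                positivity
            · have hC1pos : 0 < C1 := by rw [hC1def]; positivity
              have hC2pos : 0 < C2 := by
                rw [hC2def]
                have h1 : 0 < T * (1 / r) := mul_pos hT0 hrinv0
                have h2 : 0 < 1 + (T * (1 / r) + (1 - 1 / r)) := by linarith
                exact mul_pos (by positivity) h2
              positivity
        _ = C1 * C2 / Z * (E y * E y) * (Real.exp y * Real.exp (-(β * y))) := by ring
        _ = C1 * C2 / Z * Real.exp (2 * T * y ^ (1 / r)) *
            (Real.exp y * Real.exp (-(β * y))) := by
            rw [hEdef]
            simp only
            rw [← Real.exp_add, show T * y ^ (1 / r) + T * y ^ (1 / r)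
              = 2 * T * y ^ (1 / r) by ring]
        _ ≤ Real.exp (δ / 2 * y) * Real.exp (δ / 2 * y) *
            (Real.exp y * Real.exp (-(β * y))) := by
            refine mul_le_mul (mul_le_mul h7 (Real.exp_le_exp.mpr h6) (Real.exp_pos _).le
              (Real.exp_pos _).le) le_rfl (by positivity) (by positivity)
        _ = Real.exp (-δ * y) := by
            rw [← Real.exp_add, ← Real.exp_add, ← Real.exp_add]
            congr 1
            rw [hδdef]
            ring
    · -- positivity
      rw [hFd y hyL, show (aa * E y + aa * E y * (T * (1 / r) * y ^ (1 / r - 1)) - α₁) / α₂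
        = Qf y by rw [hQdef]]
      exact hQpos
    · -- continuity
      have cm1 : ContinuousAt (fun y : ℝ => y ^ (1 / r - 1)) y :=
        Real.continuousAt_rpow_const _ _ (Or.inl hy0.ne')
      have cm2 : ContinuousAt (fun y : ℝ => y ^ (1 / r - 1 - 1)) y :=
        Real.continuousAt_rpow_const _ _ (Or.inl hy0.ne')
      have cE : ContinuousAt E y := by
        rw [hEdef]
        exact ((Real.continuousAt_rpow_const _ _ (Or.inl hy0.ne')).const_mul T).rexp
      have cQ : ContinuousAt Qf y := by
        rw [hQdef]
        exact (((cE.const_mul aa).add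
          ((cE.const_mul aa).mul (cm1.const_mul (T * (1 / r))))).sub
          continuousAt_const).div_const α₂
      have hZQne : Z * Qf y ≠ 0 := (mul_pos hZ0 hQpos).ne'
      have cS3 : ContinuousAt (fun y => 1 / (Z * Qf y) *
          Real.exp (-(|Real.log (Qf y) - μ| ^ r / (r * σ ^ r)))) y := by
        refine ContinuousAt.mul ?_ ?_
        · exact continuousAt_const.div (continuousAt_const.mul cQ) hZQne
        · exact (((((cQ.log hQpos.ne').sub continuousAt_const).abs.rpow_const
            (Or.inr hr0.le)).div_const _).neg).rexp
      rw [hGdef]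
      exact ((Real.continuous_exp.continuousAt.mul
        ((cE.const_mul aa).add ((cE.mul cm1).const_mul (aa * T * (1 / r))))).mul
        (((cE.mul cm1).const_mul (aa * T * (1 / r))).add
          ((((cE.mul ((cm1.const_mul (1 / r)).const_mul T)).mul cm1).add
            (cE.mul (cm2.const_mul (1 / r - 1)))).const_mul (aa * T * (1 / r))))).mul cS3
  exact tail_lemma _ G _ hδ0 main


/-- Corollary 5.2: `I(c)` is finite for Weibull and generalized
lognormal reference models. -/
theorem stmt17
    (φ f : ℝ → ℝ)
    (hf : ∀ x ∈ Set.Ioi (0:ℝ), f x = Real.exp (-(φ x)))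
    (d : ClassIIData φ)
    (hcase :
      (∃ k lam : ℝ, 0 < k ∧ k < 1 ∧ 0 < lam ∧
        (∀ x ∈ Set.Ioi (0:ℝ),
          f x = k / lam * (x / lam) ^ (k - 1) * Real.exp (-((x / lam) ^ k))) ∧
        d.Φ = (fun x => (x / lam) ^ k) ∧
        d.Ψ = (fun y => lam * y ^ (1 / k))) ∨
      (∃ r σ μ Z : ℝ, 1 < r ∧ 0 < σ ∧
        Z = 2 * r ^ (1 / r) * σ * Real.Gamma (1 + 1 / r) ∧
        (∀ x ∈ Set.Ioi (0:ℝ),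
          f x = 1 / (Z * x) * Real.exp (-(|Real.log x - μ| ^ r / (r * σ ^ r)))) ∧
        d.Φ = (fun x => Real.log x ^ r / (r * σ ^ r)) ∧
        d.Ψ = (fun y => Real.exp (σ * r ^ (1 / r) * y ^ (1 / r))))) :
    ∀ θ : ℝ, 1 < θ → ∀ α₁ : ℝ, ∀ α₂ : ℝ, 0 < α₂ → ∃ c : ℝ, 0 < c ∧
      (∀ y ∈ Set.Ici c, 0 < (deriv (d.FPhi θ) (Real.exp y) - α₁) / α₂) ∧
      IntegrableOn (d.Iintegrand θ α₁ α₂ f) (Set.Ioi c) := by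
  rcases hcase with ⟨k, lam, hk0, hk1, hlam, hfW, hΦ, hΨ⟩ |
    ⟨r, σ, μ, Z, hr1, hσ, hZdef, hfG, hΦ, hΨ⟩
  · exact stmt17_case1 φ f d k lam hk0 hk1 hlam hfW hΦ hΨ
  · exact stmt17_case2 φ f d r σ μ Z hr1 hσ hZdef hfG hΦ hΨ
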